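/- There exists a constant δ₀ ∈ (0,1) such that for all δ ∈ (0,δ₀] and all ν ∈ (0, 1/(10√(log(1/δ)))), letting t = Φ⁻¹(δ), one has Φ(t) - Φ(t-ν) ≥ (1/8)·δ·ν·√(log(1/δ)). -/

import Mathlib

open MeasureTheory Real Set Filter

/-- The standard Gaussian CDF. -/
noncomputable def gaussCDF (t : ℝ) : ℝ :=
  ∫ x in Set.Iic t, Real.exp (-x ^ 2 / 2) / Real.sqrt (2 * Real.pi)

noncomputable def phi (x : ℝ) : ℝ := Real.exp (-x ^ 2 / 2) / Real.sqrt (2 * Real.pi)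

lemma gaussCDF_eq (t : ℝ) : gaussCDF t = ∫ x in Set.Iic t, phi x := rfl

lemma sqrt_two_pi_pos : 0 < Real.sqrt (2 * Real.pi) :=
  Real.sqrt_pos.mpr (by positivity)

lemma phi_nonneg (x : ℝ) : 0 ≤ phi x :=
  div_nonneg (Real.exp_nonneg _) (Real.sqrt_nonneg _)

lemma integrable_exp_half : Integrable (fun x : ℝ => Real.exp (-x ^ 2 / 2)) := by
  have heq : (fun x : ℝ => Real.exp (-x ^ 2 / 2)) = fun x : ℝ => Real.exp (-(1/2) * x ^ 2) := by
    funext x; congr 1; ring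
  rw [heq]
  exact integrable_exp_neg_mul_sq (by norm_num)

lemma integrable_phi : Integrable phi := by
  unfold phi
  exact integrable_exp_half.div_const _

lemma integrable_neg_mul_phi : Integrable (fun x => (-x) * phi x) := by
  have heq : (fun x : ℝ => (-x) * phi x)
      = fun x : ℝ => -(x * Real.exp (-(1/2) * x ^ 2) / Real.sqrt (2 * Real.pi)) := by
    funext x
    unfold phi
    rw [show (-(1/2) * x ^ 2 : ℝ) = -x ^ 2 / 2 by ring]
    ring
  rw [heq]
  exact ((integrable_mul_exp_neg_mul_sq (by norm_num)).div_const _).neg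

lemma hasDerivAt_phi (x : ℝ) : HasDerivAt phi ((-x) * phi x) x := by
  have h1 : HasDerivAt (fun y : ℝ => -y ^ 2 / 2) (-x) x := by
    have := ((hasDerivAt_pow 2 x).neg).div_const 2
    refine this.congr_deriv ?_
    simp
    ring
  have h2 := (h1.exp).div_const (Real.sqrt (2 * Real.pi))
  refine h2.congr_deriv ?_
  unfold phi
  ring

lemma tendsto_phi_atBot : Tendsto phi atBot (nhds 0) := by
  have hsq : Tendsto (fun x : ℝ => x ^ 2) atBot atTop := by
    have h := (tendsto_pow_atTop (two_ne_zero)).comp (tendsto_neg_atBot_atTop (G := ℝ))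
    have heq : ((fun x : ℝ => x ^ 2) ∘ Neg.neg) = fun x : ℝ => x ^ 2 := by
      funext x; simp [Function.comp, even_two.neg_pow]
    rwa [heq] at h
  have h1 : Tendsto (fun x : ℝ => -x ^ 2 / 2) atBot atBot := by
    have h := (tendsto_neg_atTop_atBot.comp hsq).atBot_div_const (by norm_num : (0:ℝ) < 2)
    exact h.congr (fun x => by simp [Function.comp])
  have h2 := (Real.tendsto_exp_atBot.comp h1).div_const (Real.sqrt (2 * Real.pi))
  rw [zero_div] at h2
  exact h2

lemma gaussCDF_sub (a b : ℝ) (hab : a ≤ b) :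
    gaussCDF b - gaussCDF a = ∫ x in Set.Ioc a b, phi x := by
  rw [gaussCDF_eq, gaussCDF_eq,
    intervalIntegral.integral_Iic_sub_Iic integrable_phi.integrableOn integrable_phi.integrableOn,
    intervalIntegral.integral_of_le hab]

lemma gaussCDF_mono : Monotone gaussCDF := by
  intro a b hab
  have h := gaussCDF_sub a b hab
  have h2 : 0 ≤ ∫ x in Set.Ioc a b, phi x :=
    setIntegral_nonneg measurableSet_Ioc fun x _ => phi_nonneg x
  linarith

lemma gaussCDF_nonneg (t : ℝ) : 0 ≤ gaussCDF t := by
  rw [gaussCDF_eq]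
  exact setIntegral_nonneg measurableSet_Iic fun x _ => phi_nonneg x

lemma gaussCDF_diff_ge {a b : ℝ} (hab : a ≤ b) (hb : b ≤ 0) :
    (b - a) * phi a ≤ gaussCDF b - gaussCDF a := by
  rw [gaussCDF_sub a b hab]
  have h1 : ∫ _x in Set.Ioc a b, phi a = (b - a) * phi a := by
    rw [setIntegral_const, Real.volume_real_Ioc_of_le hab, smul_eq_mul]
  rw [← h1]
  refine setIntegral_mono_on ?_ integrable_phi.integrableOn measurableSet_Ioc ?_
  · exact integrableOn_const (by rw [Real.volume_Ioc]; exact ENNReal.ofReal_ne_top)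
  · intro x hx
    have hx1 := hx.1
    have hx2 := hx.2
    have hexp : Real.exp (-a ^ 2 / 2) ≤ Real.exp (-x ^ 2 / 2) := by
      apply Real.exp_le_exp.mpr
      nlinarith
    unfold phi
    exact div_le_div_of_nonneg_right hexp sqrt_two_pi_pos.le

lemma mills {t : ℝ} (ht : t < 0) : (-t) * gaussCDF t ≤ phi t := by
  have key : ∫ x in Set.Iic t, (-x) * phi x = phi t := by
    rw [integral_Iic_of_hasDerivAt_of_tendsto' (fun x _ => hasDerivAt_phi x)
      integrable_neg_mul_phi.integrableOn tendsto_phi_atBot, sub_zero]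
  rw [gaussCDF_eq, ← MeasureTheory.integral_const_mul, ← key]
  refine setIntegral_mono_on ((integrable_phi.const_mul (-t)).integrableOn)
    integrable_neg_mul_phi.integrableOn measurableSet_Iic ?_
  intro x hx
  exact mul_le_mul_of_nonneg_right (by simp only [Set.mem_Iic] at hx; linarith) (phi_nonneg x)

set_option maxHeartbeats 1600000 in
/-- Shifting the boundary of a small halfspace inward by `ν` decreases its Gaussian
measure by at least `(1/8)·δ·ν·√(log(1/δ))`. -/
theorem gaussian_halfspace_shift_lower_bound :
    ∃ δ₀ : ℝ, δ₀ ∈ Set.Ioo (0:ℝ) 1 ∧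
      ∀ δ ∈ Set.Ioc (0:ℝ) δ₀,
        ∀ ν ∈ Set.Ioo (0:ℝ) (1 / (10 * Real.sqrt (Real.log (1/δ)))),
          ∀ t : ℝ, gaussCDF t = δ →
            (1/8) * δ * ν * Real.sqrt (Real.log (1/δ)) ≤ gaussCDF t - gaussCDF (t - ν) := by
  refine ⟨Real.exp (-16), ⟨Real.exp_pos _, Real.exp_lt_one_iff.mpr (by norm_num)⟩, ?_⟩
  rintro δ ⟨hδ0, hδ1⟩ ν ⟨hν0, hν1⟩ t ht
  set L : ℝ := Real.log (1/δ) with hLdef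
  have hπ3 : 3 < Real.pi := Real.pi_gt_three
  have hπ : Real.pi < 3.15 := by
    have := Real.pi_lt_d2
    linarith
  set s : ℝ := Real.sqrt (2 * Real.pi) with hsdef
  have hs0 : 0 < s := sqrt_two_pi_pos
  have hs1 : 1 ≤ s := by
    rw [hsdef, show (1:ℝ) = Real.sqrt 1 by simp]
    exact Real.sqrt_le_sqrt (by linarith)
  have hs3 : s ≤ 3 := by
    rw [hsdef, show (3:ℝ) = Real.sqrt 9 by
      rw [show (9:ℝ) = 3^2 by norm_num, Real.sqrt_sq]; norm_num]
    exact Real.sqrt_le_sqrt (by linarith)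
  -- L ≥ 16
  have hL16 : 16 ≤ L := by
    have h1 : Real.exp 16 ≤ 1/δ := by
      rw [le_div_iff₀ hδ0]
      calc Real.exp 16 * δ ≤ Real.exp 16 * Real.exp (-16) :=
            mul_le_mul_of_nonneg_left hδ1 (Real.exp_nonneg _)
        _ = 1 := by rw [← Real.exp_add]; norm_num
    calc (16:ℝ) = Real.log (Real.exp 16) := (Real.log_exp _).symm
      _ ≤ L := Real.log_le_log (Real.exp_pos _) h1
  have hL0 : 0 < L := by linarith
  have hδL : Real.exp (-L) = δ := by
    rw [hLdef, one_div, Real.log_inv, neg_neg, Real.exp_log hδ0]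
  set R : ℝ := Real.sqrt L with hRdef
  have hRsq : R ^ 2 = L := Real.sq_sqrt hL0.le
  have hR4 : 4 ≤ R := by
    rw [hRdef, show (4:ℝ) = Real.sqrt 16 by
      rw [show (16:ℝ) = 4^2 by norm_num, Real.sqrt_sq]; norm_num]
    exact Real.sqrt_le_sqrt hL16
  have hR0 : 0 < R := by linarith
  have hRL : R ≤ L / 4 := by nlinarith
  have hphi : ∀ x : ℝ, phi x = Real.exp (-x ^ 2 / 2) / s := fun x => rfl
  have exp2_ge : (6:ℝ) ≤ Real.exp 2 := by
    have h := Real.exp_one_gt_d9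
    have h2 : Real.exp 2 = Real.exp 1 * Real.exp 1 := by rw [← Real.exp_add]; norm_num
    nlinarith [Real.exp_pos 1]
  -- Step 1 : t ≤ -R
  have step1 : t ≤ -R := by
    have hdiff : ((-R) - (-R - 1)) * phi (-R - 1) ≤ gaussCDF (-R) - gaussCDF (-R - 1) :=
      gaussCDF_diff_ge (by linarith) (by linarith)
    rw [show ((-R) - (-R - 1) : ℝ) = 1 by ring, one_mul] at hdiff
    have hnn := gaussCDF_nonneg (-R - 1)
    have hval : 2 * δ ≤ phi (-R - 1) := by
      rw [hphi, le_div_iff₀ hs0]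
      have h1 : 2 * δ * s ≤ 6 * Real.exp (-L) := by
        rw [← hδL]
        nlinarith [Real.exp_nonneg (-L)]
      have h2 : (6:ℝ) * Real.exp (-L) ≤ Real.exp 2 * Real.exp (-L) :=
        mul_le_mul_of_nonneg_right exp2_ge (Real.exp_nonneg _)
      have h3 : Real.exp 2 * Real.exp (-L) = Real.exp (2 - L) := by
        rw [← Real.exp_add]; ring_nf
      have h4 : Real.exp (2 - L) ≤ Real.exp (-(-R - 1) ^ 2 / 2) := by
        apply Real.exp_le_exp.mpr
        nlinarith
      linarith
    have hb : 2 * δ ≤ gaussCDF (-R) := by linarith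
    by_contra hcon
    push_neg at hcon
    have := gaussCDF_mono hcon.le
    rw [ht] at this
    linarith
  have ht0 : t < 0 := by linarith
  -- Step 2 : -sqrt(2L) ≤ t
  set R2 : ℝ := Real.sqrt (2 * L) with hR2def
  have hR2sq : R2 ^ 2 = 2 * L := Real.sq_sqrt (by linarith)
  have hR2_5 : 5 ≤ R2 := by
    rw [hR2def, show (5:ℝ) = Real.sqrt 25 by
      rw [show (25:ℝ) = 5^2 by norm_num, Real.sqrt_sq]; norm_num]
    exact Real.sqrt_le_sqrt (by linarith)
  have hR2_le : R2 ≤ 3/2 * R := by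
    rw [hR2def, show (3/2 * R : ℝ) = Real.sqrt ((3/2 * R)^2) by
      rw [Real.sqrt_sq]; linarith]
    exact Real.sqrt_le_sqrt (by nlinarith)
  have step2 : -R2 ≤ t := by
    have hm := mills (t := -R2) (by linarith)
    rw [neg_neg] at hm
    have hphiR2 : phi (-R2) = Real.exp (-L) / s := by
      rw [hphi]
      congr 2
      rw [neg_sq, hR2sq]; ring
    by_contra hcon
    push_neg at hcon
    have hmono := gaussCDF_mono hcon.le
    rw [ht] at hmono
    have h5 : R2 * δ ≤ δ := by
      calc R2 * δ ≤ R2 * gaussCDF (-R2) :=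
            mul_le_mul_of_nonneg_left hmono (by linarith)
        _ ≤ phi (-R2) := hm
        _ = Real.exp (-L) / s := hphiR2
        _ ≤ δ := by
            rw [← hδL, div_le_iff₀ hs0]
            nlinarith [Real.exp_nonneg (-L)]
    have h6 : 5 * δ ≤ R2 * δ := mul_le_mul_of_nonneg_right hR2_5 hδ0.le
    linarith
  -- Step 3 : main estimate
  have hνR : ν * (10 * R) < 1 := by
    have h10R : 0 < 10 * R := by linarith
    calc ν * (10 * R) < 1 / (10 * R) * (10 * R) :=
          mul_lt_mul_of_pos_right hν1 h10R
      _ = 1 := by field_simp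
  have hdiff : ν * phi (t - ν) ≤ gaussCDF t - gaussCDF (t - ν) := by
    have h := gaussCDF_diff_ge (a := t - ν) (b := t) (by linarith) ht0.le
    rwa [show t - (t - ν) = ν by ring] at h
  -- phi (t - ν) ≥ 3/4 * phi t
  have hmt : -t ≤ R2 := by linarith
  have hRν : R * ν ≤ 1/10 := by nlinarith
  have hν40 : ν ≤ 1/40 := by nlinarith
  have hνsq : ν ^ 2 ≤ 1/1600 := by nlinarith
  have hp1 : (-t) * ν ≤ R2 * ν := mul_le_mul_of_nonneg_right hmt hν0.le
  have hp2 : R2 * ν ≤ 3/2 * R * ν := by nlinarith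
  have hexp : 3/4 * Real.exp (-t ^ 2 / 2) ≤ Real.exp (-(t - ν) ^ 2 / 2) := by
    have hA : -t ^ 2 / 2 + (-(1:ℝ)/4) ≤ -(t - ν) ^ 2 / 2 := by nlinarith
    calc 3/4 * Real.exp (-t ^ 2 / 2)
        ≤ Real.exp (-(1:ℝ)/4) * Real.exp (-t ^ 2 / 2) := by
          nlinarith [Real.exp_nonneg (-t ^ 2 / 2), Real.add_one_le_exp (-(1:ℝ)/4)]
      _ = Real.exp (-t ^ 2 / 2 + (-(1:ℝ)/4)) := by rw [← Real.exp_add]; ring_nf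
      _ ≤ Real.exp (-(t - ν) ^ 2 / 2) := Real.exp_le_exp.mpr hA
  have hphi_lb : 3/4 * phi t ≤ phi (t - ν) := by
    rw [hphi t, hphi (t - ν), ← mul_div_assoc]
    exact div_le_div_of_nonneg_right hexp hs0.le
  -- Mills: phi t ≥ R * δ
  have hmt2 : R * δ ≤ phi t := by
    have hm := mills ht0
    rw [ht] at hm
    calc R * δ ≤ (-t) * δ := mul_le_mul_of_nonneg_right (by linarith) hδ0.le
      _ ≤ phi t := hm
  have hkey : 1/8 * δ * ν * R ≤ ν * phi (t - ν) := by
    have h1 : 3/4 * (R * δ) ≤ phi (t - ν) := by nlinarith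
    nlinarith [phi_nonneg (t - ν)]
  calc 1/8 * δ * ν * Real.sqrt L = 1/8 * δ * ν * R := by rw [hRdef]
    _ ≤ ν * phi (t - ν) := hkey
    _ ≤ gaussCDF t - gaussCDF (t - ν) := hdiff
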